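/- Let a,b,e be real numbers with a(a+e) < 0, and let α₁, α₃ : ℝ → ℝ be continuous. Define φ(t) = bt + ∫₀ᵗ (b·α₁(s) + α₃(s)) ds, x(t) = √(-a(a+e))·sin(φ(t)), y(t) = √(-a(a+e))·cos(φ(t)), z(t) = -a. Then for every α₂ : ℝ → ℝ continuous, (x,y,z) satisfies the system ẋ = (ax+by+xz)(1+α₁(t)) + x(a+z)α₂(t) + yα₃(t), ẏ = (-bx+ay+yz)(1+α₁(t)) + y(a+z)α₂(t) - xα₃(t), ż = (ez - x² - y² - z²)(1+α₁(t)+α₂(t)) for all t ∈ ℝ. -/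

import Mathlib

theorem stmt4 (a b e : ℝ) (h : a*(a+e) < 0)
    (α₁ α₂ α₃ : ℝ → ℝ)
    (hc1 : Continuous α₁) (hc2 : Continuous α₂) (hc3 : Continuous α₃)
    (φ x y z : ℝ → ℝ)
    (hφ : φ = fun t => b*t + ∫ s in (0:ℝ)..t, (b * α₁ s + α₃ s))
    (hx : x = fun t => Real.sqrt (-(a*(a+e))) * Real.sin (φ t))
    (hy : y = fun t => Real.sqrt (-(a*(a+e))) * Real.cos (φ t))
    (hz : z = fun _ => -a) :
    ∀ t : ℝ,
      HasDerivAt x ((a*x t + b*y t + x t * z t)*(1 + α₁ t)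
        + x t*(a + z t)*α₂ t + y t * α₃ t) t ∧
      HasDerivAt y ((-b*x t + a*y t + y t * z t)*(1 + α₁ t)
        + y t*(a + z t)*α₂ t - x t * α₃ t) t ∧
      HasDerivAt z ((e*z t - x t^2 - y t^2 - z t^2)*(1 + α₁ t + α₂ t)) t := by
  intro t
  set K := Real.sqrt (-(a*(a+e))) with hK
  have hK2 : K^2 = -(a*(a+e)) := Real.sq_sqrt (by linarith)
  have hφd : HasDerivAt φ (b + (b * α₁ t + α₃ t)) t := by
    rw [hφ]
    have h1 : HasDerivAt (fun t : ℝ => b * t) (b * 1) t := (hasDerivAt_id t).const_mul b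
    have h2 := (((continuous_const.mul hc1 : Continuous fun s => b * α₁ s)).add hc3).integral_hasStrictDerivAt 0 t
    have h3 := h1.add h2.hasDerivAt
    rw [mul_one] at h3
    exact h3
  have hxd : HasDerivAt x (K * Real.cos (φ t) * (b + (b * α₁ t + α₃ t))) t := by
    rw [hx]
    simpa [mul_assoc] using (hφd.sin).const_mul K
  have hyd : HasDerivAt y (K * (-Real.sin (φ t)) * (b + (b * α₁ t + α₃ t))) t := by
    rw [hy]
    simpa [mul_comm, mul_assoc, mul_left_comm] using (hφd.cos).const_mul K
  refine ⟨?_, ?_, ?_⟩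
  · convert hxd using 1
    simp only [hx, hy, hz]
    ring
  · convert hyd using 1
    simp only [hx, hy, hz]
    ring
  · have : HasDerivAt z 0 t := by rw [hz]; exact hasDerivAt_const t (-a)
    convert this using 1
    simp only [hx, hy, hz]
    have hsc := Real.sin_sq_add_cos_sq (φ t)
    linear_combination (1 + α₁ t + α₂ t) * (-(K^2) * hsc - hK2)
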